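/- Consider the 4-dimensional Lyness map F(x,y,z,t) = (y, z, t, (a+y+z+t)/x), a ≥ 0, and the vector field X_4(x,y,z,t) = (1/(xyzt))·[ x(x+1)(1+y+z)(1+z+t)(a+x+y+z−yt), y(y+1)(1+z+t)(a+x+y+z+t+xt)(x−z), z(z+1)(1+x+y)(a+x+y+z+t+xt)(y−t), −t(t+1)(1+x+y)(1+y+z)(a+y+z+t−xz) ]. Then X_4 is a Lie symmetry of F: X_4(F(p)) = DF(p)·X_4(p) for all p in the positive orthant. -/

import Mathlib

/-- the vector field `X₄` is a Lie symmetry of the 4-dimensional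
Lyness map: `X₄(F(p)) = DF(p)·X₄(p)` on the positive orthant. -/
theorem lyness4_lie_symmetry (a : ℝ) (ha : 0 ≤ a)
    (F X : ℝ × ℝ × ℝ × ℝ → ℝ × ℝ × ℝ × ℝ)
    (hF : ∀ p : ℝ × ℝ × ℝ × ℝ,
      F p = (p.2.1, p.2.2.1, p.2.2.2, (a + p.2.1 + p.2.2.1 + p.2.2.2) / p.1))
    (hX : ∀ p : ℝ × ℝ × ℝ × ℝ,
      X p = (1 / (p.1 * p.2.1 * p.2.2.1 * p.2.2.2)) •
        ((p.1 * (p.1 + 1) * (1 + p.2.1 + p.2.2.1) * (1 + p.2.2.1 + p.2.2.2) *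
            (a + p.1 + p.2.1 + p.2.2.1 - p.2.1 * p.2.2.2),
          p.2.1 * (p.2.1 + 1) * (1 + p.2.2.1 + p.2.2.2) *
            (a + p.1 + p.2.1 + p.2.2.1 + p.2.2.2 + p.1 * p.2.2.2) * (p.1 - p.2.2.1),
          p.2.2.1 * (p.2.2.1 + 1) * (1 + p.1 + p.2.1) *
            (a + p.1 + p.2.1 + p.2.2.1 + p.2.2.2 + p.1 * p.2.2.2) * (p.2.1 - p.2.2.2),
          -(p.2.2.2 * (p.2.2.2 + 1) * (1 + p.1 + p.2.1) * (1 + p.2.1 + p.2.2.1) *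
            (a + p.2.1 + p.2.2.1 + p.2.2.2 - p.1 * p.2.2.1)))))
    (p : ℝ × ℝ × ℝ × ℝ)
    (hp1 : 0 < p.1) (hp2 : 0 < p.2.1) (hp3 : 0 < p.2.2.1) (hp4 : 0 < p.2.2.2) :
    X (F p) = fderiv ℝ F p (X p) := by
  have hFfun : F = fun q : ℝ × ℝ × ℝ × ℝ =>
      (q.2.1, q.2.2.1, q.2.2.2, (a + q.2.1 + q.2.2.1 + q.2.2.2) * (q.1)⁻¹) := by
    funext q
    rw [hF q, div_eq_mul_inv]
  have hq1 : HasFDerivAt (𝕜 := ℝ) (fun q : ℝ × ℝ × ℝ × ℝ => q.1) _ p := hasFDerivAt_fst (𝕜 := ℝ)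
  have hq2 : HasFDerivAt (𝕜 := ℝ) (fun q : ℝ × ℝ × ℝ × ℝ => q.2.1) _ p := (hasFDerivAt_snd (𝕜 := ℝ)).fst
  have hq3 : HasFDerivAt (𝕜 := ℝ) (fun q : ℝ × ℝ × ℝ × ℝ => q.2.2.1) _ p :=
    (hasFDerivAt_snd (𝕜 := ℝ)).snd.fst
  have hq4 : HasFDerivAt (𝕜 := ℝ) (fun q : ℝ × ℝ × ℝ × ℝ => q.2.2.2) _ p :=
    (hasFDerivAt_snd (𝕜 := ℝ)).snd.snd
  have hs : HasFDerivAt (𝕜 := ℝ) (fun q : ℝ × ℝ × ℝ × ℝ => a + q.2.1 + q.2.2.1 + q.2.2.2) _ p :=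
    (((hasFDerivAt_const a p).add hq2).add hq3).add hq4
  have hinv : HasFDerivAt (𝕜 := ℝ) (fun q : ℝ × ℝ × ℝ × ℝ => (q.1)⁻¹) _ p :=
    HasDerivAt.comp_hasFDerivAt (𝕜 := ℝ) p (hasDerivAt_inv hp1.ne') hq1
  have hD : HasFDerivAt (𝕜 := ℝ) (fun q : ℝ × ℝ × ℝ × ℝ =>
      (q.2.1, q.2.2.1, q.2.2.2, (a + q.2.1 + q.2.2.1 + q.2.2.2) * (q.1)⁻¹)) _ p :=
    hq2.prodMk (hq3.prodMk (hq4.prodMk (hs.mul hinv)))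
  rw [hFfun, hD.fderiv, hX p, hX _]
  simp only [ContinuousLinearMap.prod_apply, ContinuousLinearMap.comp_apply,
    ContinuousLinearMap.coe_fst', ContinuousLinearMap.coe_snd',
    ContinuousLinearMap.add_apply, ContinuousLinearMap.smul_apply,
    ContinuousLinearMap.zero_apply, Prod.smul_mk, smul_eq_mul]
  obtain ⟨x, y, z, t⟩ := p
  simp only at hp1 hp2 hp3 hp4 ⊢
  have hx := hp1.ne'
  have hy := hp2.ne'
  have hz := hp3.ne'
  have ht := hp4.ne'
  have hs : a + y + z + t ≠ 0 := by positivity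
  refine Prod.ext ?_ (Prod.ext ?_ (Prod.ext ?_ ?_)) <;> simp only <;>
    field_simp <;> ring
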